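/- Let A be a finitely generated abelian group and f : A → A an endomorphism whose restriction to the torsion subgroup T(A) is an automorphism of T(A). Then the torsion subgroup of the direct limit lim(A, f) of the stationary system with connecting maps f is isomorphic to T(A). -/

import Mathlib

/-- If `A` is a finitely generated abelian group and `f : A → A` restricts to an automorphism
of the torsion subgroup `T(A)`, then the torsion subgroup of the stationary direct limit
`lim(A, f)` is isomorphic to `T(A)`. -/
theorem stmt3 {A : Type} [AddCommGroup A] [AddGroup.FG A] (f : AddMonoid.End A)
    (hbij : Set.BijOn f (AddCommGroup.torsion A : Set A) (AddCommGroup.torsion A : Set A)) :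
    Nonempty
      ((@AddCommGroup.torsion
          (AddCommGroup.DirectLimit (fun _ : ℕ => A)
            (fun i j _ => ((f ^ (j - i) : AddMonoid.End A) : A →+ A)))
          (AddCommGroup.DirectLimit.addCommGroup _ _)) ≃+
        AddCommGroup.torsion A) := by
  classical
  set F : ∀ i j : ℕ, i ≤ j → A →+ A :=
    fun i j _ => ((f ^ (j - i) : AddMonoid.End A) : A →+ A) with hF
  haveI hds : DirectedSystem (fun _ : ℕ => A) (fun i j h => F i j h) := by
    constructor
    · intro i x
      show ((f ^ (i - i) : AddMonoid.End A) : A →+ A) x = x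
      rw [Nat.sub_self, pow_zero]
      rfl
    · intro k j i hij hjk x
      show ((f ^ (k - j) : AddMonoid.End A) : A →+ A)
          (((f ^ (j - i) : AddMonoid.End A) : A →+ A) x)
        = ((f ^ (k - i) : AddMonoid.End A) : A →+ A) x
      simp only [AddMonoidHom.coe_coe, AddMonoid.End.coe_pow, ← Function.iterate_add_apply]
      congr 1
      omega
  set T : AddSubgroup A := AddCommGroup.torsion A with hT
  set L := AddCommGroup.DirectLimit (fun _ : ℕ => A) F with hL
  set TL : AddSubgroup L := AddCommGroup.torsion L with hTL
  have hbijn : ∀ n : ℕ, Set.BijOn (f ^ n : AddMonoid.End A) (T : Set A) (T : Set A) := by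
    intro n
    induction n with
    | zero => simpa using Set.bijOn_id _
    | succ n ih =>
      have he : ((f ^ (n + 1) : AddMonoid.End A) : A → A)
          = ((f ^ n : AddMonoid.End A) : A → A) ∘ (f : A → A) := by
        simp [Function.iterate_succ]
      rw [he]
      exact ih.comp hbij
  have hmem : ∀ x : T, (AddCommGroup.DirectLimit.of (fun _ : ℕ => A) F 0) x.1 ∈ TL := by
    intro x
    exact (AddCommGroup.DirectLimit.of (fun _ : ℕ => A) F 0).isOfFinAddOrder x.2
  set φ : T →+ TL := AddMonoidHom.codRestrict
    ((AddCommGroup.DirectLimit.of (fun _ : ℕ => A) F 0).comp T.subtype) TL hmem with hφ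
  have hφval : ∀ x : T, (φ x : L) = AddCommGroup.DirectLimit.of (fun _ : ℕ => A) F 0 x.1 :=
    fun x => rfl
  have hinj : Function.Injective φ := by
    intro x y hxy
    have h0 : AddCommGroup.DirectLimit.of (fun _ : ℕ => A) F 0 (x.1 - y.1) = 0 := by
      have hv := congrArg Subtype.val hxy
      rw [hφval, hφval] at hv
      rw [map_sub, hv, sub_self]
    obtain ⟨j, hj, hj0⟩ := AddCommGroup.DirectLimit.of.zero_exact 0 _ h0
    have hsub : x.1 - y.1 ∈ T := sub_mem x.2 y.2
    have heq : (f ^ (j - 0) : AddMonoid.End A) (x.1 - y.1)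
        = (f ^ (j - 0) : AddMonoid.End A) 0 := by
      rw [map_zero]; exact hj0
    have h00 : x.1 - y.1 = (0 : A) := (hbijn (j - 0)).injOn hsub T.zero_mem heq
    exact Subtype.ext (sub_eq_zero.mp h00)
  have hsurj : Function.Surjective φ := by
    rintro ⟨y, hy⟩
    obtain ⟨j, a, ha⟩ : ∃ j a, AddCommGroup.DirectLimit.of (fun _ : ℕ => A) F j a = y :=
      AddCommGroup.DirectLimit.induction_on y fun i x => ⟨i, x, rfl⟩
    obtain ⟨n, hn, hny⟩ := isOfFinAddOrder_iff_nsmul_eq_zero.mp hy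
    have h0 : AddCommGroup.DirectLimit.of (fun _ : ℕ => A) F j (n • a) = 0 := by
      rw [map_nsmul, ha, hny]
    obtain ⟨k, hjk, hk0⟩ := AddCommGroup.DirectLimit.of.zero_exact j _ h0
    -- f^(k-j) a is torsion
    have hmemT : (f ^ (k - j) : AddMonoid.End A) a ∈ T := by
      refine isOfFinAddOrder_iff_nsmul_eq_zero.mpr ⟨n, hn, ?_⟩
      have : (f ^ (k - j) : AddMonoid.End A) (n • a) = 0 := by exact hk0
      simpa [map_nsmul] using this
    obtain ⟨x, hxT, hxeq⟩ := (hbijn k).surjOn hmemT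
    refine ⟨⟨x, hxT⟩, ?_⟩
    apply Subtype.ext
    rw [hφval]
    have h1 : AddCommGroup.DirectLimit.of (fun _ : ℕ => A) F k (F 0 k (Nat.zero_le k) x)
        = AddCommGroup.DirectLimit.of (fun _ : ℕ => A) F 0 x :=
      by exact AddCommGroup.DirectLimit.of_f (G := fun _ : ℕ => A) (f := F) (Nat.zero_le k) x
    have h2 : AddCommGroup.DirectLimit.of (fun _ : ℕ => A) F k (F j k hjk a)
        = AddCommGroup.DirectLimit.of (fun _ : ℕ => A) F j a :=
      by exact AddCommGroup.DirectLimit.of_f (G := fun _ : ℕ => A) (f := F) hjk a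
    have h3 : F 0 k (Nat.zero_le k) x = F j k hjk a := by
      simp only [hF, AddMonoidHom.coe_coe]
      rw [Nat.sub_zero]
      exact hxeq
    show AddCommGroup.DirectLimit.of (fun _ : ℕ => A) F 0 x = y
    rw [← h1, h3, h2, ha]
  exact ⟨(AddEquiv.ofBijective φ ⟨hinj, hsurj⟩).symm⟩
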